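/- If a string x of length n has periods of orders i and j with i + j ≤ n, then x has a period of order gcd(i, j). Here x has a period of order p (1 ≤ p ≤ n) if x[i+p] = x[i] for all valid indices i, i.e., x(t+p) = x(t) for all t with t + p < n. -/
import Mathlib

/-- Key step: subtracting the smaller period keeps periodicity. -/
private lemma fw_sub (n i j : ℕ) (x : ℕ → Bool)
    (hj : 1 ≤ j) (hlt : j < i) (hij : i + j ≤ n)
    (hpi : ∀ t, t + i < n → x (t + i) = x t)
    (hpj : ∀ t, t + j < n → x (t + j) = x t) :
    ∀ t, t + (i - j) < n → x (t + (i - j)) = x t := by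
  intro t ht
  by_cases h : t + i < n
  · have h1 : x (t + (i - j) + j) = x (t + (i - j)) := by
      apply hpj
      omega
    have h2 : t + (i - j) + j = t + i := by omega
    rw [h2] at h1
    rw [← h1, hpi t h]
  · have htj : j ≤ t := by omega
    have h1 : x (t - j + i) = x (t - j) := by
      apply hpi
      omega
    have h2 : x (t - j + j) = x (t - j) := by
      apply hpj
      omega
    have e1 : t - j + i = t + (i - j) := by omega
    have e2 : t - j + j = t := by omega
    rw [e1] at h1
    rw [e2] at h2
    rw [h1, h2]

private lemma fw_aux (n : ℕ) (x : ℕ → Bool) :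
    ∀ m i j, i + j ≤ m → 1 ≤ i → 1 ≤ j → i + j ≤ n →
    (∀ t, t + i < n → x (t + i) = x t) →
    (∀ t, t + j < n → x (t + j) = x t) →
    ∀ t, t + Nat.gcd i j < n → x (t + Nat.gcd i j) = x t := by
  intro m
  induction m with
  | zero => intro i j h hi; omega
  | succ m ih =>
    intro i j hm hi hj hn hpi hpj
    rcases lt_trichotomy i j with h | h | h
    · -- i < j : reduce j to j - i
      have key := ih i (j - i) (by omega) hi (by omega) (by omega) hpi
        (fw_sub n j i x hi h (by omega) hpj hpi)
      have hg : Nat.gcd i (j - i) = Nat.gcd i j := by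
        rw [Nat.gcd_comm i (j - i), Nat.gcd_sub_self_left (le_of_lt h),
          Nat.gcd_comm]
      rw [hg] at key
      exact key
    · subst h
      simpa [Nat.gcd_self] using hpi
    · have key := ih (i - j) j (by omega) (by omega) hj (by omega)
        (fw_sub n i j x hj h hn hpi hpj) hpj
      have hg : Nat.gcd (i - j) j = Nat.gcd i j := by
        rw [Nat.gcd_comm (i - j) j, Nat.gcd_sub_self_right (le_of_lt h),
          Nat.gcd_comm]
      rw [hg] at key
      exact key

/-- Fine–Wilf / Lyndon–Schützenberger periodicity lemma: if a string `x` of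
length `n` has periods of orders `i` and `j` with `i + j ≤ n`, then it has a
period of order `gcd i j`. -/
theorem fine_wilf (n i j : ℕ) (x : ℕ → Bool)
    (hi : 1 ≤ i) (hj : 1 ≤ j) (hij : i + j ≤ n)
    (hpi : ∀ t, t + i < n → x (t + i) = x t)
    (hpj : ∀ t, t + j < n → x (t + j) = x t) :
    ∀ t, t + Nat.gcd i j < n → x (t + Nat.gcd i j) = x t :=
  fw_aux n x (i + j) i j le_rfl hi hj hij hpi hpj
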